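/- arXiv:quant-ph/0208115 — 2 statements merged into one kernel-verified Lean document; each statement's English description precedes it below -/
import Mathlib

section
/- Monotonicity of Belavkin–Staszewski relative entropy under an ampliated CP map in the finite-dimensional commuting-reference case: if Φ is a trace-preserving completely positive map on matrices and ω, φ are density matrices with φ positive definite such that Φ(φ) is positive definite, then Tr Φ(ω) log( Φ(ω)^{1/2} Φ(φ)⁻¹ Φ(ω)^{1/2} ) ≤ Tr ω log( ω^{1/2} φ⁻¹ ω^{1/2} ). -/
open Matrix Kronecker
open scoped ComplexOrder

noncomputable section
open Classical

/-- Hermitian functional calculus, extended by junk value `0` to non-Hermitian matrices. -/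
def matCFC {d : Type*} [Fintype d] [DecidableEq d] (f : ℝ → ℝ)
    (A : Matrix d d ℂ) : Matrix d d ℂ :=
  if h : A.IsHermitian then h.cfc f else 0

/-- Matrix logarithm (spectral, with `Real.log 0 = 0` on the kernel). -/
def matLog {d : Type*} [Fintype d] [DecidableEq d] (A : Matrix d d ℂ) : Matrix d d ℂ :=
  matCFC Real.log A

/-- Moore–Penrose pseudoinverse of a Hermitian matrix (junk value `0` otherwise). -/
def matPinv {d : Type*} [Fintype d] [DecidableEq d] (A : Matrix d d ℂ) : Matrix d d ℂ :=
  matCFC (·⁻¹) A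

/-- Positive square root of a positive semidefinite matrix (junk value `0` otherwise). -/
def matSqrt {d : Type*} [Fintype d] [DecidableEq d] (A : Matrix d d ℂ) : Matrix d d ℂ :=
  if h : A.PosSemidef then h.1.cfc Real.sqrt else 0

/-- von Neumann entropy `-∑ λᵢ log λᵢ` (junk value `0` for non-Hermitian matrices). -/
def vN {d : Type*} [Fintype d] [DecidableEq d] (A : Matrix d d ℂ) : ℝ :=
  if h : A.IsHermitian then -∑ i, (h.eigenvalues i) * Real.log (h.eigenvalues i) else 0

/-- Belavkin–Staszewski relative entropy `Tr ω log(ω^{1/2} φ⁻ ω^{1/2})`. -/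
def RBS {d : Type*} [Fintype d] [DecidableEq d] (ω φ : Matrix d d ℂ) : ℝ :=
  ((ω * matLog (matSqrt ω * matPinv φ * matSqrt ω)).trace).re

/-- Partial trace over the second tensor factor. -/
def ptraceR {m n : Type*} [Fintype m] [Fintype n]
    (M : Matrix (m × n) (m × n) ℂ) : Matrix m m ℂ :=
  Matrix.of fun i j => ∑ k, M (i, k) (j, k)

/-- Partial trace over the first tensor factor. -/
def ptraceL {m n : Type*} [Fintype m] [Fintype n]
    (M : Matrix (m × n) (m × n) ℂ) : Matrix n n ℂ :=
  Matrix.of fun k l => ∑ i, M (i, k) (i, l)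



section helperLemmas
open MeasureTheory Set Filter Topology

lemma myint {x : ℝ} (hx : 0 ≤ x) :
    IntegrableOn (fun t => x*(x-1)/((1+t)*(x+t))) (Ioi (0:ℝ)) ∧
    ∫ t in Ioi (0:ℝ), x*(x-1)/((1+t)*(x+t)) = x * Real.log x := by
  rcases eq_or_lt_of_le hx with h0 | hxpos
  · simp [← h0]
  rcases eq_or_ne x 1 with h1 | h1
  · simp [h1]
  -- x > 0, x ≠ 1
  set k : ℝ → ℝ := fun t => 1/((1+t)*(x+t)) with hk
  set G : ℝ → ℝ := fun t => (Real.log (1+t) - Real.log (x+t)) / (x-1) with hG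
  have hderiv : ∀ t ∈ Ici (0:ℝ), HasDerivAt G (k t) t := by
    intro t ht
    have h1t : (0:ℝ) < 1 + t := by linarith [mem_Ici.mp ht]
    have hxt : (0:ℝ) < x + t := by linarith [mem_Ici.mp ht]
    have d1 : HasDerivAt (fun t => Real.log (1+t)) (1/(1+t)) t := by
      have := (Real.hasDerivAt_log h1t.ne').comp t ((hasDerivAt_id t).const_add 1)
      simpa [one_div, Function.comp_def] using this
    have d2 : HasDerivAt (fun t => Real.log (x+t)) (1/(x+t)) t := by
      have := (Real.hasDerivAt_log hxt.ne').comp t ((hasDerivAt_id t).const_add x)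
      simpa [one_div, Function.comp_def] using this
    have := (d1.sub d2).div_const (x-1)
    refine this.congr_deriv ?_
    have hx1 : x - 1 ≠ 0 := sub_ne_zero.mpr h1
    rw [hk]
    field_simp
    ring
  have hpos : ∀ t ∈ Ioi (0:ℝ), 0 ≤ k t := by
    intro t ht
    have h1t : (0:ℝ) < 1 + t := by linarith [mem_Ioi.mp ht]
    have hxt : (0:ℝ) < x + t := by linarith [mem_Ioi.mp ht]
    positivity
  have htend : Tendsto G atTop (𝓝 0) := by
    have h2 : Tendsto (fun t => (1+t)/(x+t)) atTop (𝓝 1) := by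
      have : Tendsto (fun t : ℝ => (1-x)/(x+t) + 1) atTop (𝓝 (0+1)) := by
        refine Tendsto.add_const 1 ?_
        exact Tendsto.div_atTop tendsto_const_nhds (tendsto_atTop_add_const_left _ x tendsto_id)
      rw [zero_add] at this
      refine this.congr' ?_
      filter_upwards [eventually_gt_atTop (max 0 (-x))] with t ht
      have hxt : (0:ℝ) < x + t := by
        have := lt_of_le_of_lt (le_max_right 0 (-x)) ht; linarith
      field_simp
      ring
    have h3 : Tendsto (fun t => Real.log ((1+t)/(x+t))) atTop (𝓝 0) := by
      have := (Real.continuousAt_log (one_ne_zero)).tendsto.comp h2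
      simpa [Function.comp_def] using this
    have h4 : Tendsto (fun t => (Real.log ((1+t)/(x+t)))/(x-1)) atTop (𝓝 0) := by
      simpa using h3.div_const (x-1)
    refine h4.congr' ?_
    filter_upwards [eventually_gt_atTop (max 0 (-x))] with t ht
    have h1t : (0:ℝ) < 1 + t := by
      have := lt_of_le_of_lt (le_max_left 0 (-x)) ht; linarith
    have hxt : (0:ℝ) < x + t := by
      have := lt_of_le_of_lt (le_max_right 0 (-x)) ht; linarith
    rw [hG, Real.log_div h1t.ne' hxt.ne']
  have hint : IntegrableOn k (Ioi (0:ℝ)) :=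
    integrableOn_Ioi_deriv_of_nonneg' hderiv hpos htend
  have hval : ∫ t in Ioi (0:ℝ), k t = 0 - G 0 :=
    integral_Ioi_of_hasDerivAt_of_nonneg (hderiv 0 self_mem_Ici).continuousAt.continuousWithinAt
      (fun t ht => hderiv t (mem_Ici.mpr (le_of_lt (mem_Ioi.mp ht)))) hpos htend
  have hG0 : G 0 = (- Real.log x) / (x-1) := by
    simp [hG]
  have heq : ∀ t : ℝ, x*(x-1)/((1+t)*(x+t)) = (x*(x-1)) * k t := by
    intro t; rw [hk]; ring
  have hfe : (fun t => x*(x-1)/((1+t)*(x+t))) = fun t => (x*(x-1)) * k t := funext heq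
  constructor
  · rw [hfe]
    exact hint.const_mul (x*(x-1))
  · calc ∫ t in Ioi (0:ℝ), x*(x-1)/((1+t)*(x+t)) = ∫ t in Ioi (0:ℝ), (x*(x-1)) * k t := by
          rw [hfe]
      _ = (x*(x-1)) * ∫ t in Ioi (0:ℝ), k t := by rw [integral_const_mul]
      _ = x * Real.log x := by
          rw [hval, hG0]
          have hx1 : x - 1 ≠ 0 := sub_ne_zero.mpr h1
          field_simp
          ring

lemma ealg {x t : ℝ} (hx : 0 ≤ x) (ht : 0 < t) :
    x*(x-1)/((1+t)*(x+t)) = x/(1+t) - 1 + t/(x+t) := by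
  have h1 : (1:ℝ) + t ≠ 0 := by linarith
  have h2 : x + t ≠ 0 := by linarith
  field_simp
  ring

lemma key_sum {σ : Type*} [Fintype σ] (t : ℝ) (ht' : 0 < t) (a lm : σ → ℝ) (hlm : ∀ i, 0 ≤ lm i) :
    ∑ i, a i * (lm i*(lm i-1)/((1+t)*(lm i+t)))
      = (∑ i, a i * lm i)/(1+t) - (∑ i, a i) + t * ∑ i, a i / (lm i + t) := by
  rw [Finset.sum_div, ← Finset.sum_sub_distrib, Finset.mul_sum, ← Finset.sum_add_distrib]
  congr 1; ext i
  rw [ealg (hlm i) ht']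
  have h2 : lm i + t ≠ 0 := by have := hlm i; linarith
  field_simp

lemma compare_sums {ι κ : Type*} [Fintype ι] [Fintype κ]
    (c lam : ι → ℝ) (d mu : κ → ℝ)
    (hc : ∀ i, 0 ≤ c i) (hlam : ∀ i, 0 ≤ lam i) (hd : ∀ j, 0 ≤ d j) (hmu : ∀ j, 0 ≤ mu j)
    (hsum : ∑ j, d j = ∑ i, c i)
    (hmean : ∑ j, d j * mu j = ∑ i, c i * lam i)
    (hres : ∀ t : ℝ, 0 < t → ∑ j, d j / (mu j + t) ≤ ∑ i, c i / (lam i + t)) :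
    ∑ j, d j * (mu j * Real.log (mu j)) ≤ ∑ i, c i * (lam i * Real.log (lam i)) := by
  have int1 : ∀ i : ι, IntegrableOn (fun t => c i * (lam i*(lam i-1)/((1+t)*(lam i+t)))) (Ioi (0:ℝ)) :=
    fun i => ((myint (hlam i)).1.const_mul (c i))
  have int2 : ∀ j : κ, IntegrableOn (fun t => d j * (mu j*(mu j-1)/((1+t)*(mu j+t)))) (Ioi (0:ℝ)) :=
    fun j => ((myint (hmu j)).1.const_mul (d j))
  have I1 : IntegrableOn (fun t => ∑ i, c i * (lam i*(lam i-1)/((1+t)*(lam i+t)))) (Ioi (0:ℝ)) := by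
    apply integrable_finset_sum _ (fun i _ => int1 i)
  have I2 : IntegrableOn (fun t => ∑ j, d j * (mu j*(mu j-1)/((1+t)*(mu j+t)))) (Ioi (0:ℝ)) := by
    apply integrable_finset_sum _ (fun j _ => int2 j)
  have E1 : ∫ t in Ioi (0:ℝ), (∑ i, c i * (lam i*(lam i-1)/((1+t)*(lam i+t))))
      = ∑ i, c i * (lam i * Real.log (lam i)) := by
    rw [integral_finset_sum _ (fun i _ => int1 i)]
    congr 1; ext i
    rw [integral_const_mul, (myint (hlam i)).2]
  have E2 : ∫ t in Ioi (0:ℝ), (∑ j, d j * (mu j*(mu j-1)/((1+t)*(mu j+t))))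
      = ∑ j, d j * (mu j * Real.log (mu j)) := by
    rw [integral_finset_sum _ (fun j _ => int2 j)]
    congr 1; ext j
    rw [integral_const_mul, (myint (hmu j)).2]
  rw [← E1, ← E2]
  apply setIntegral_mono_on I2 I1 measurableSet_Ioi
  intro t ht
  have ht' : (0:ℝ) < t := ht
  have K1 := key_sum t ht' c lam hlam
  have K2 := key_sum t ht' d mu hmu
  rw [K1, K2, hsum, hmean]
  have := hres t ht'
  nlinarith


variable {d : Type*} [Fintype d] [DecidableEq d]

lemma contOn (f : ℝ → ℝ) (A : Matrix d d ℂ) : ContinuousOn f (spectrum ℝ A) := by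
  rw [continuousOn_iff_continuous_restrict]; fun_prop

lemma spectrum_nonneg_of_psd {X : Matrix d d ℂ} (hX : X.PosSemidef) :
    ∀ x ∈ spectrum ℝ X, 0 ≤ x := by
  intro x hx
  rw [hX.1.spectrum_real_eq_range_eigenvalues] at hx
  obtain ⟨i, rfl⟩ := hx
  exact hX.eigenvalues_nonneg i

lemma spectrum_pos_of_pd {X : Matrix d d ℂ} (hX : X.PosDef) :
    ∀ x ∈ spectrum ℝ X, 0 < x := by
  intro x hx
  rw [hX.1.spectrum_real_eq_range_eigenvalues] at hx
  obtain ⟨i, rfl⟩ := hx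
  exact hX.eigenvalues_pos i

omit [Fintype d] [DecidableEq d] in
lemma isSelfAdjoint_of_herm {X : Matrix d d ℂ} (hX : X.IsHermitian) : IsSelfAdjoint X := hX

-- X + t•1 as cfc
lemma cfcAddConst {X : Matrix d d ℂ} (hX : X.IsHermitian) (t : ℝ) :
    cfc (fun x : ℝ => x + t) X = X + (t:ℂ) • 1 := by
  rw [cfc_add X (fun x : ℝ => x) (fun _ => t) (contOn _ _) (contOn _ _)]
  congr 1
  · exact cfc_id' ℝ X hX
  · exact (cfc_const t X hX).trans (by simp [Algebra.algebraMap_eq_smul_one])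

lemma cfc_resolvent {X : Matrix d d ℂ} (hX : X.PosSemidef) {t : ℝ} (ht : 0 < t) :
    cfc (fun x : ℝ => (x + t)⁻¹) X = (X + (t:ℂ) • 1)⁻¹ := by
  symm
  apply Matrix.inv_eq_left_inv
  rw [← cfcAddConst hX.1 t, ← cfc_mul _ _ X (contOn _ _) (contOn _ _)]
  have : cfc (fun x : ℝ => (x + t)⁻¹ * (x + t)) X = cfc (fun _ : ℝ => (1:ℝ)) X := by
    apply cfc_congr
    intro x hx
    have hx0 : 0 ≤ x := spectrum_nonneg_of_psd hX x hx
    have : x + t ≠ 0 := by positivity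
    field_simp
  rw [this]
  exact cfc_const_one ℝ X hX.1

lemma pow_flip (A : Matrix d d ℂ) (k : ℕ) :
    A * (Aᴴ * A)^k = (A * Aᴴ)^k * A := by
  induction k with
  | zero => simp
  | succ k ih =>
    rw [pow_succ, pow_succ, ← mul_assoc, ih]
    simp only [mul_assoc]

lemma aeval_flip (A : Matrix d d ℂ) (q : Polynomial ℝ) :
    A * Polynomial.aeval (Aᴴ * A) q = Polynomial.aeval (A * Aᴴ) q * A := by
  induction q using Polynomial.induction_on' with
  | add p q hp hq => simp [map_add, mul_add, add_mul, hp, hq]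
  | monomial k r =>
    simp only [Polynomial.aeval_monomial]
    calc A * (algebraMap ℝ (Matrix d d ℂ) r * (Aᴴ * A) ^ k)
        = r • (A * (Aᴴ * A)^k) := by
          rw [Algebra.algebraMap_eq_smul_one]; simp [mul_smul_comm, smul_mul_assoc]
      _ = r • ((A * Aᴴ)^k * A) := by rw [pow_flip]
      _ = algebraMap ℝ (Matrix d d ℂ) r * (A * Aᴴ) ^ k * A := by
          rw [Algebra.algebraMap_eq_smul_one]; simp [mul_smul_comm, smul_mul_assoc]

lemma cfc_flip (A : Matrix d d ℂ) (f : ℝ → ℝ) :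
    A * cfc f (Aᴴ * A) = cfc f (A * Aᴴ) * A := by
  have h1 : (Aᴴ * A).IsHermitian := (posSemidef_conjTranspose_mul_self A).1
  have h2 : (A * Aᴴ).IsHermitian := (posSemidef_self_mul_conjTranspose A).1
  have hfin : (spectrum ℝ (Aᴴ*A) ∪ spectrum ℝ (A*Aᴴ)).Finite :=
    Matrix.finite_real_spectrum.union Matrix.finite_real_spectrum
  set S : Finset ℝ := hfin.toFinset with hS
  set p : Polynomial ℝ := Lagrange.interpolate S id f with hp
  have hid : Set.InjOn id (S : Set ℝ) := Function.injective_id.injOn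
  have hpeval : ∀ x ∈ S, p.eval x = f x := by
    intro x hx
    exact Lagrange.eval_interpolate_at_node f hid hx
  have e1 : cfc f (Aᴴ * A) = cfc p.eval (Aᴴ * A) := by
    apply cfc_congr
    intro x hx
    exact (hpeval x (by rw [hS]; simp [Set.Finite.mem_toFinset]; exact Or.inl hx)).symm
  have e2 : cfc f (A * Aᴴ) = cfc p.eval (A * Aᴴ) := by
    apply cfc_congr
    intro x hx
    exact (hpeval x (by rw [hS]; simp [Set.Finite.mem_toFinset]; exact Or.inr hx)).symm
  have E1 : cfc f (Aᴴ * A) = Polynomial.aeval (Aᴴ*A) p := e1.trans (cfc_polynomial p (Aᴴ*A) h1)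
  have E2 : cfc f (A * Aᴴ) = Polynomial.aeval (A*Aᴴ) p := e2.trans (cfc_polynomial p (A*Aᴴ) h2)
  rw [E1, E2]
  exact aeval_flip A p

lemma psd_diag {P : Matrix d d ℂ} (hP : P.PosSemidef) (i : d) :
    0 ≤ (P i i).re ∧ (P i i).im = 0 := by
  have h := hP.diag_nonneg (i := i)
  rw [Complex.le_def] at h
  exact ⟨by simpa using h.1, by simpa using h.2.symm⟩

lemma trace_mul_cfc (P : Matrix d d ℂ) {X : Matrix d d ℂ} (hX : X.IsHermitian) (f : ℝ → ℝ) :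
    (P * cfc f X).trace = ∑ i, (f (hX.eigenvalues i) : ℂ) *
      ((star (hX.eigenvectorUnitary : Matrix d d ℂ) * P * (hX.eigenvectorUnitary : Matrix d d ℂ)) i i) := by
  have hc : cfc f X = (hX.eigenvectorUnitary : Matrix d d ℂ) *
      Matrix.diagonal (RCLike.ofReal ∘ f ∘ hX.eigenvalues) * star (hX.eigenvectorUnitary : Matrix d d ℂ) :=
    hX.cfc_eq f
  rw [hc]
  set U : Matrix d d ℂ := (hX.eigenvectorUnitary : Matrix d d ℂ)
  set D : Matrix d d ℂ := Matrix.diagonal (RCLike.ofReal ∘ f ∘ hX.eigenvalues)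
  have : P * (U * D * star U) = (P * U * D) * star U := by simp only [mul_assoc]
  rw [this, Matrix.trace_mul_comm, Matrix.trace]
  have : star U * (P * U * D) = (star U * P * U) * D := by simp only [mul_assoc]
  rw [this]
  congr 1; ext i
  rw [Matrix.diag_apply, Matrix.mul_diagonal]
  simp [mul_comm]

lemma conj_psd_diag {P : Matrix d d ℂ} (hP : P.PosSemidef) {X : Matrix d d ℂ}
    (hX : X.IsHermitian) (i : d) :
    0 ≤ ((star (hX.eigenvectorUnitary : Matrix d d ℂ) * P * (hX.eigenvectorUnitary : Matrix d d ℂ)) i i).re ∧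
    ((star (hX.eigenvectorUnitary : Matrix d d ℂ) * P * (hX.eigenvectorUnitary : Matrix d d ℂ)) i i).im = 0 := by
  have h : (star (hX.eigenvectorUnitary : Matrix d d ℂ) * P *
      (star (hX.eigenvectorUnitary : Matrix d d ℂ))ᴴ).PosSemidef :=
    hP.mul_mul_conjTranspose_same (star (hX.eigenvectorUnitary : Matrix d d ℂ))
  rw [← Matrix.star_eq_conjTranspose, star_star] at h
  exact psd_diag h i

lemma trace_mul_cfc_re (P : Matrix d d ℂ) {X : Matrix d d ℂ} (hX : X.IsHermitian) (f : ℝ → ℝ) :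
    ((P * cfc f X).trace).re = ∑ i, f (hX.eigenvalues i) *
      ((star (hX.eigenvectorUnitary : Matrix d d ℂ) * P * (hX.eigenvectorUnitary : Matrix d d ℂ)) i i).re := by
  rw [trace_mul_cfc P hX f, Complex.re_sum]
  congr 1; ext i
  rw [Complex.mul_re]
  simp

lemma matPinv_posdef {σ : Matrix d d ℂ} (hσ : σ.PosDef) : matPinv σ = σ⁻¹ := by
  have hsa : IsSelfAdjoint σ := hσ.1
  rw [matPinv, matCFC, dif_pos hσ.1, ← hσ.1.cfc_eq]
  symm
  apply Matrix.inv_eq_right_inv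
  nth_rewrite 1 [← cfc_id' ℝ σ hsa]
  rw [← cfc_mul _ _ σ (contOn _ _) (contOn _ _)]
  have : cfc (fun x : ℝ => x * x⁻¹) σ = cfc (fun _ : ℝ => (1:ℝ)) σ := by
    apply cfc_congr
    intro x hx
    have := spectrum_pos_of_pd hσ x hx
    field_simp
  rw [this]
  exact cfc_const_one ℝ σ hsa

section sqrtSec
open scoped MatrixOrder

lemma hsqrt_facts {X : Matrix d d ℂ} (hX : X.PosSemidef) :
    (hX.1.cfc Real.sqrt).PosSemidef ∧ hX.1.cfc Real.sqrt * hX.1.cfc Real.sqrt = X := by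
  have hXsa : IsSelfAdjoint X := hX.1
  rw [← hX.1.cfc_eq]
  constructor
  · exact Matrix.nonneg_iff_posSemidef.mp (cfc_nonneg fun x _ => Real.sqrt_nonneg x)
  · rw [← cfc_mul _ _ X (contOn _ _) (contOn _ _)]
    conv_rhs => rw [← cfc_id' ℝ X hXsa]
    apply cfc_congr
    intro x hx
    exact Real.mul_self_sqrt (spectrum_nonneg_of_psd hX x hx)

end sqrtSec

set_option maxHeartbeats 2000000 in
lemma key_facts {ρ σ : Matrix d d ℂ} (hρ : ρ.PosSemidef) (hσ : σ.PosDef) :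
    ∃ c lam : d → ℝ, (∀ i, 0 ≤ c i) ∧ (∀ i, 0 ≤ lam i) ∧
      ∑ i, c i = σ.trace.re ∧
      ∑ i, c i * lam i = ρ.trace.re ∧
      (∀ t : ℝ, 0 < t → ∑ i, c i / (lam i + t) = ((σ * (ρ + (t:ℂ)•σ)⁻¹ * σ).trace).re) ∧
      RBS ρ σ = ∑ i, c i * (lam i * Real.log (lam i)) := by
  -- square root of σ
  set S : Matrix d d ℂ := hσ.posSemidef.1.cfc Real.sqrt with hSdef
  have hS : S.PosSemidef := (hsqrt_facts hσ.posSemidef).1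
  have hSS : S * S = σ := (hsqrt_facts hσ.posSemidef).2
  have hSdet : IsUnit S.det := by
    have hdet : S.det * S.det = σ.det := by rw [← det_mul, hSS]
    have : σ.det ≠ 0 := ne_of_gt hσ.det_pos
    rw [isUnit_iff_ne_zero]
    intro h
    rw [h, mul_zero] at hdet
    exact this hdet.symm
  set T : Matrix d d ℂ := S⁻¹ with hTdef
  have hTS : T * S = 1 := Matrix.nonsing_inv_mul S hSdet
  have hST : S * T = 1 := Matrix.mul_nonsing_inv S hSdet
  have hTH : Tᴴ = T := by rw [hTdef, Matrix.conjTranspose_nonsing_inv, hS.1]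
  set X : Matrix d d ℂ := T * ρ * T with hXdef
  have hX : X.PosSemidef := by
    have := hρ.mul_mul_conjTranspose_same T
    rwa [hTH] at this
  -- square root of ρ
  set R : Matrix d d ℂ := hρ.1.cfc Real.sqrt with hRdef
  have hR : R.PosSemidef := (hsqrt_facts hρ).1
  have hRR : R * R = ρ := (hsqrt_facts hρ).2
  set A : Matrix d d ℂ := R * T with hAdef
  have hAH : Aᴴ = T * R := by rw [hAdef, conjTranspose_mul, hTH, hR.1]
  have hXA : X = Aᴴ * A := by
    rw [hAH, hAdef, hXdef, ← hRR]
    simp only [mul_assoc]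
  have hSinv : σ⁻¹ = T * T := by rw [← hSS, Matrix.mul_inv_rev]
  have hW : R * σ⁻¹ * R = A * Aᴴ := by
    rw [hSinv, hAH, hAdef]
    simp only [mul_assoc]
  have hWpsd : (R * σ⁻¹ * R).PosSemidef := by
    rw [hW]; exact posSemidef_self_mul_conjTranspose A
  -- the coefficients
  have hXsa : IsSelfAdjoint X := hX.1
  have hsqrt : matSqrt ρ = R := by rw [matSqrt, dif_pos hρ, hRdef]
  have hσX : σ * X = S * ρ * T := by
    rw [hXdef, ← hSS]
    calc S * S * (T * ρ * T) = S * (S * T) * ρ * T := by simp only [mul_assoc]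
      _ = S * ρ * T := by rw [hST, mul_one]
  have hss : S * (σ * S) = σ * σ := by rw [← hSS]; simp only [mul_assoc]
  clear_value S T X R A
  set U : Matrix d d ℂ := (hX.1.eigenvectorUnitary : Matrix d d ℂ) with hUdef
  refine ⟨fun i => ((star U * σ * U) i i).re, hX.1.eigenvalues, 
    fun i => (conj_psd_diag hσ.posSemidef hX.1 i).1, hX.eigenvalues_nonneg, ?_, ?_, ?_, ?_⟩
  · -- sum c = tr σ
    have h0 := trace_mul_cfc_re σ hX.1 (fun _ => 1)
    rw [cfc_const_one ℝ X hXsa, mul_one] at h0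
    simpa using h0.symm
  · -- sum c lam = tr ρ
    have h1 := trace_mul_cfc_re σ hX.1 (fun x => x)
    rw [cfc_id' ℝ X hXsa] at h1
    have h3 : (σ * X).trace = ρ.trace := by
      rw [hσX, Matrix.trace_mul_cycle, hTS, one_mul]
    rw [h3] at h1
    rw [h1]
    exact Finset.sum_congr rfl fun i _ => mul_comm _ _
  · -- resolvent
    intro t ht
    have h1 := trace_mul_cfc_re σ hX.1 (fun x => (x + t)⁻¹)
    have h2 : cfc (fun x : ℝ => (x + t)⁻¹) X = (X + (t:ℂ) • 1)⁻¹ := cfc_resolvent hX ht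
    have h3 : X + (t:ℂ) • 1 = T * (ρ + (t:ℂ) • σ) * T := by
      rw [hXdef]
      have : T * ((t:ℂ) • σ) * T = (t:ℂ) • 1 := by
        rw [Matrix.mul_smul, Matrix.smul_mul, ← hSS]
        calc (t:ℂ) • (T * (S * S) * T) = (t:ℂ) • ((T * S) * (S * T)) := by simp only [mul_assoc]
          _ = (t:ℂ) • (1 : Matrix d d ℂ) := by rw [hTS, hST, one_mul]
      rw [← this, Matrix.mul_add, Matrix.add_mul]
    have hTinv : T⁻¹ = S := by
      rw [hTdef]; exact Matrix.nonsing_inv_nonsing_inv S hSdet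
    have h4 : (X + (t:ℂ) • 1)⁻¹ = S * (ρ + (t:ℂ) • σ)⁻¹ * S := by
      rw [h3, Matrix.mul_inv_rev, Matrix.mul_inv_rev, hTinv, ← mul_assoc]
    have h5 : (σ * (S * (ρ + (t:ℂ) • σ)⁻¹ * S)).trace = (σ * (ρ + (t:ℂ)•σ)⁻¹ * σ).trace := by
      calc (σ * (S * (ρ + (t:ℂ) • σ)⁻¹ * S)).trace
          = ((σ * S) * (ρ + (t:ℂ) • σ)⁻¹ * S).trace := by simp only [mul_assoc]
        _ = (S * (σ * S) * (ρ + (t:ℂ) • σ)⁻¹).trace := by rw [Matrix.trace_mul_cycle]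
        _ = (σ * σ * (ρ + (t:ℂ) • σ)⁻¹).trace := by rw [hss]
        _ = (σ * (ρ + (t:ℂ) • σ)⁻¹ * σ).trace := (Matrix.trace_mul_cycle σ _ σ).symm
    rw [h2, h4, h5] at h1
    rw [h1]
    exact Finset.sum_congr rfl fun i _ => by rw [div_eq_inv_mul]
  · -- RBS
    have hpinv : matPinv σ = σ⁻¹ := matPinv_posdef hσ
    have hlog : matLog (R * σ⁻¹ * R) = cfc Real.log (R * σ⁻¹ * R) := by
      rw [matLog, matCFC, dif_pos hWpsd.1, ← hWpsd.1.cfc_eq]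
    unfold RBS
    rw [hpinv, hsqrt, hlog]
    set L : Matrix d d ℂ := cfc Real.log (R * σ⁻¹ * R) with hLdef
    have hLA : A * cfc Real.log X = L * A := by
      rw [hLdef, hXA, hW]
      exact cfc_flip A Real.log
    have hRAS : R = A * S := by
      rw [hAdef]
      calc R = R * (T * S) := by rw [hTS, mul_one]
        _ = R * T * S := by rw [mul_assoc]
    have htr : (ρ * L).trace = (σ * cfc (fun x => x * Real.log x) X).trace := by
      have e1 : cfc (fun x : ℝ => x * Real.log x) X
          = cfc (fun x : ℝ => x) X * cfc Real.log X :=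
        cfc_mul _ _ X (contOn _ _) (contOn _ _)
      have e2 : σ * cfc (fun x : ℝ => x * Real.log x) X = S * ρ * T * cfc Real.log X := by
        rw [e1, ← mul_assoc]
        congr 1
        rw [cfc_id' ℝ X hXsa]
        exact hσX
      rw [e2]
      calc (ρ * L).trace = (R * (R * L)).trace := by rw [← hRR, mul_assoc]
        _ = ((R * L) * R).trace := Matrix.trace_mul_comm _ _
        _ = ((R * L) * (A * S)).trace := by rw [← hRAS]
        _ = ((R * (L * A)) * S).trace := by simp only [mul_assoc]
        _ = ((R * (A * cfc Real.log X)) * S).trace := by rw [hLA]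
        _ = (S * (R * (A * cfc Real.log X))).trace := Matrix.trace_mul_comm _ _
        _ = ((S * (R * A)) * cfc Real.log X).trace := by simp only [mul_assoc]
        _ = (S * ρ * T * cfc Real.log X).trace := by
            rw [hAdef, show R * (R * T) = ρ * T from by rw [← mul_assoc, hRR]]
            simp only [mul_assoc]
    rw [htr, trace_mul_cfc_re σ hX.1 (fun x => x * Real.log x)]
    exact Finset.sum_congr rfl fun i _ => by ring
  

lemma trace_re_nonneg {Q : Matrix d d ℂ} (hQ : Q.PosSemidef) : 0 ≤ Q.trace.re := by
  rw [Matrix.trace, Complex.re_sum]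
  exact Finset.sum_nonneg fun i _ => (psd_diag hQ i).1

lemma posdef_smul {σ : Matrix d d ℂ} (hσ : σ.PosDef) {t : ℝ} (ht : 0 < t) :
    ((t:ℂ) • σ).PosDef := by
  constructor
  · rw [Matrix.IsHermitian, conjTranspose_smul, hσ.1]
    congr 1
    simp [Complex.ext_iff]
  · exact (hσ.smul (show (0:ℂ) < t by exact_mod_cast ht)).2


end helperLemmas

theorem stmt15 {n m : ℕ}
    (Φ : Matrix (Fin n) (Fin n) ℂ →ₗ[ℂ] Matrix (Fin m) (Fin m) ℂ)
    (hCP : ∀ (k : ℕ) (B : Matrix (Fin n × Fin k) (Fin n × Fin k) ℂ), B.PosSemidef →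
      (Matrix.of fun p q : Fin m × Fin k =>
        Φ (Matrix.of fun a b => B (a, p.2) (b, q.2)) p.1 q.1).PosSemidef)
    (hTP : ∀ A, (Φ A).trace = A.trace)
    (ω φ : Matrix (Fin n) (Fin n) ℂ)
    (hω : ω.PosSemidef) (hωtr : ω.trace = 1)
    (hφ : φ.PosDef) (hφtr : φ.trace = 1) (hΦφ : (Φ φ).PosDef) :
    RBS (Φ ω) (Φ φ) ≤ RBS ω φ := by
  -- Φ preserves positive semidefiniteness
  have hΦpsd : ∀ B : Matrix (Fin n) (Fin n) ℂ, B.PosSemidef → (Φ B).PosSemidef := by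
    intro B hB
    have hB1 : (B.submatrix (Prod.fst : Fin n × Fin 1 → Fin n)
        (Prod.fst : Fin n × Fin 1 → Fin n)).PosSemidef := hB.submatrix _
    have hC := hCP 1 _ hB1
    have : Φ B = (Matrix.of fun p q : Fin m × Fin 1 =>
        Φ (Matrix.of fun a b => (B.submatrix Prod.fst Prod.fst) (a, p.2) (b, q.2)) p.1 q.1).submatrix
        (fun i => (i, 0)) (fun i => (i, 0)) := by
      ext i j
      simp only [Matrix.submatrix_apply, Matrix.of_apply]
      congr 1
    rw [this]
    exact hC.submatrix _
  -- the bridge inequality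
  have hbridge : ∀ t : ℝ, 0 < t →
      ((Φ φ * (Φ ω + (t:ℂ) • Φ φ)⁻¹ * Φ φ).trace).re ≤
      ((φ * (ω + (t:ℂ) • φ)⁻¹ * φ).trace).re := by
    intro t ht
    set A : Matrix (Fin n) (Fin n) ℂ := ω + (t:ℂ) • φ with hAdef
    have hA : A.PosDef := Matrix.PosDef.posSemidef_add hω (posdef_smul hφ ht)
    have hΦA : Φ A = Φ ω + (t:ℂ) • Φ φ := by rw [hAdef, map_add, LinearMap.map_smul]
    have hΦApd : (Φ A).PosDef := by
      rw [hΦA]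
      exact Matrix.PosDef.posSemidef_add (hΦpsd ω hω) (posdef_smul hΦφ ht)
    haveI : Invertible A := Matrix.invertibleOfIsUnitDet A (Matrix.isUnit_iff_isUnit_det A |>.mp hA.isUnit)
    haveI : Invertible (Φ A) := Matrix.invertibleOfIsUnitDet _ (Matrix.isUnit_iff_isUnit_det _ |>.mp hΦApd.isUnit)
    set D : Matrix (Fin n) (Fin n) ℂ := φ * A⁻¹ * φ with hDdef
    have hM0 : (fromBlocks A φ φ D).PosSemidef := by
      have h0 : (fromBlocks A φ φᴴ D).PosSemidef := by
        rw [Matrix.PosDef.fromBlocks₁₁ φ D hA]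
        rw [hφ.1, hDdef, sub_self]
        exact Matrix.PosSemidef.zero
      rwa [hφ.1] at h0
    set g : Fin n × Fin 2 → Fin n ⊕ Fin n :=
      fun p => if p.2 = 0 then Sum.inl p.1 else Sum.inr p.1 with hg
    have hB2 : ((fromBlocks A φ φ D).submatrix g g).PosSemidef := hM0.submatrix g
    have hC := hCP 2 _ hB2
    set C : Matrix (Fin m × Fin 2) (Fin m × Fin 2) ℂ := Matrix.of fun p q : Fin m × Fin 2 =>
      Φ (Matrix.of fun a b => ((fromBlocks A φ φ D).submatrix g g) (a, p.2) (b, q.2)) p.1 q.1 with hCdef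
    set h : Fin m ⊕ Fin m → Fin m × Fin 2 :=
      Sum.elim (fun i => (i, 0)) (fun i => (i, 1)) with hh
    have s00 : (Matrix.of fun a b : Fin n =>
        ((fromBlocks A φ φ D).submatrix g g) (a, (0:Fin 2)) (b, (0:Fin 2))) = A := by
      ext a b
      simp [hg, fromBlocks]
    have s01 : (Matrix.of fun a b : Fin n =>
        ((fromBlocks A φ φ D).submatrix g g) (a, (0:Fin 2)) (b, (1:Fin 2))) = φ := by
      ext a b
      simp [hg, fromBlocks]
    have s10 : (Matrix.of fun a b : Fin n =>
        ((fromBlocks A φ φ D).submatrix g g) (a, (1:Fin 2)) (b, (0:Fin 2))) = φ := by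
      ext a b
      simp [hg, fromBlocks]
    have s11 : (Matrix.of fun a b : Fin n =>
        ((fromBlocks A φ φ D).submatrix g g) (a, (1:Fin 2)) (b, (1:Fin 2))) = D := by
      ext a b
      simp [hg, fromBlocks]
    have hCFB : C.submatrix h h = fromBlocks (Φ A) (Φ φ) (Φ φ) (Φ D) := by
      ext i j
      cases i with
      | inl i =>
        cases j with
        | inl j =>
          show C (i, 0) (j, 0) = fromBlocks (Φ A) (Φ φ) (Φ φ) (Φ D) (Sum.inl i) (Sum.inl j)
          rw [hCdef]
          simp only [Matrix.of_apply, Matrix.fromBlocks_apply₁₁]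
          rw [s00]
        | inr j =>
          show C (i, 0) (j, 1) = fromBlocks (Φ A) (Φ φ) (Φ φ) (Φ D) (Sum.inl i) (Sum.inr j)
          rw [hCdef]
          simp only [Matrix.of_apply, Matrix.fromBlocks_apply₁₂]
          rw [s01]
      | inr i =>
        cases j with
        | inl j =>
          show C (i, 1) (j, 0) = fromBlocks (Φ A) (Φ φ) (Φ φ) (Φ D) (Sum.inr i) (Sum.inl j)
          rw [hCdef]
          simp only [Matrix.of_apply, Matrix.fromBlocks_apply₂₁]
          rw [s10]
        | inr j =>
          show C (i, 1) (j, 1) = fromBlocks (Φ A) (Φ φ) (Φ φ) (Φ D) (Sum.inr i) (Sum.inr j)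
          rw [hCdef]
          simp only [Matrix.of_apply, Matrix.fromBlocks_apply₂₂]
          rw [s11]
    have hFB : (fromBlocks (Φ A) (Φ φ) (Φ φ) (Φ D)).PosSemidef := by
      rw [← hCFB]
      exact hC.submatrix h
    have hFB' : (fromBlocks (Φ A) (Φ φ) ((Φ φ)ᴴ) (Φ D)).PosSemidef := by
      rw [hΦφ.1]
      exact hFB
    have hSchur : (Φ D - (Φ φ) * (Φ A)⁻¹ * (Φ φ)).PosSemidef := by
      have := (Matrix.PosDef.fromBlocks₁₁ (Φ φ) (Φ D) hΦApd).mp hFB'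
      rwa [hΦφ.1] at this
    have htr0 : 0 ≤ ((Φ D - Φ φ * (Φ A)⁻¹ * Φ φ).trace).re := trace_re_nonneg hSchur
    rw [Matrix.trace_sub, Complex.sub_re] at htr0
    have hTPD : ((Φ D).trace).re = (D.trace).re := by rw [hTP]
    have hgoal1 : Φ φ * (Φ ω + (t:ℂ) • Φ φ)⁻¹ * Φ φ = Φ φ * (Φ A)⁻¹ * Φ φ := by rw [hΦA]
    rw [hgoal1]
    linarith
  -- final assembly
  obtain ⟨c, lam, hc, hlam, hcsum, hcmean, hcres, hcRBS⟩ := key_facts hω hφ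
  obtain ⟨dv, mu, hd, hmu, hdsum, hdmean, hdres, hdRBS⟩ := key_facts (hΦpsd ω hω) hΦφ
  rw [hcRBS, hdRBS]
  apply compare_sums c lam dv mu hc hlam hd hmu
  · rw [hdsum, hcsum, hTP]
  · rw [hdmean, hcmean, hTP]
  · intro t ht
    rw [hdres t ht, hcres t ht]
    exact hbridge t ht


end
end

section
/- For the separable (classically entangled) state ω = Σ_n μ(n) ρ_n ⊗ σ_n on ℂ^m ⊗ ℂ^d with ρ_n = |n⟩⟨n| rank-one orthogonal projectors and marginal ρ = Σ_n μ(n)|n⟩⟨n|, the entangled entropy E = Tr ω log( ω^{1/2}(ρ⁻⊗I)ω^{1/2} ) equals −Σ_n μ(n) S(σ_n), and in particular E ≤ 0. -/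
set_option maxHeartbeats 1600000
set_option linter.unusedVariables false


open Matrix Kronecker
open scoped ComplexOrder

noncomputable section
open Classical

namespace BS
set_option linter.unusedSectionVars false
set_option maxHeartbeats 1000000

section helpers
variable {n : Type*} [Fintype n] [DecidableEq n]

lemma star_outer (x : n → ℂ) : star (vecMulVec x (star x)) = vecMulVec x (star x) := by
  ext i j
  simp [Matrix.star_apply, vecMulVec_apply, mul_comm]

lemma vmv_mul (x y z t : n → ℂ) :
    vecMulVec x (star y) * vecMulVec z (star t)
      = (star y ⬝ᵥ z) • vecMulVec x (star t) := by
  ext i j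
  simp only [Matrix.mul_apply, vecMulVec_apply, Matrix.smul_apply, dotProduct, Pi.star_apply,
    smul_eq_mul]
  rw [Finset.sum_mul]
  exact Finset.sum_congr rfl fun k _ => by ring

lemma trace_outer (x : n → ℂ) : (vecMulVec x (star x)).trace = star x ⬝ᵥ x := by
  simp [Matrix.trace, Matrix.diag, vecMulVec_apply, dotProduct, mul_comm]

section cfc
variable {A : Matrix n n ℂ} (hA : A.IsHermitian)

lemma U_star_U :
    (star (IsHermitian.eigenvectorUnitary hA : Matrix n n ℂ)) *
      (IsHermitian.eigenvectorUnitary hA : Matrix n n ℂ) = 1 :=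
  Unitary.coe_star_mul_self _

lemma U_U_star :
    (IsHermitian.eigenvectorUnitary hA : Matrix n n ℂ) *
      (star (IsHermitian.eigenvectorUnitary hA : Matrix n n ℂ)) = 1 :=
  Unitary.coe_mul_star_self _

lemma cfc_eq_conj (f : ℝ → ℝ) :
    hA.cfc f = (IsHermitian.eigenvectorUnitary hA : Matrix n n ℂ) *
      diagonal (RCLike.ofReal ∘ f ∘ hA.eigenvalues) *
      (star (IsHermitian.eigenvectorUnitary hA : Matrix n n ℂ)) := by
  rw [Matrix.IsHermitian.cfc, Unitary.conjStarAlgAut_apply]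

lemma cfc_mul' (f g : ℝ → ℝ) :
    hA.cfc (fun x => f x * g x) = hA.cfc f * hA.cfc g := by
  have h : ∀ (U D V E : Matrix n n ℂ), (U * D * V) * (U * E * V) = U * (D * (V * U) * E) * V := by
    intros; noncomm_ring
  rw [cfc_eq_conj hA, cfc_eq_conj hA, cfc_eq_conj hA, h, U_star_U hA,
    mul_one, diagonal_mul_diagonal]
  have hd : (diagonal (RCLike.ofReal ∘ (fun x => f x * g x) ∘ hA.eigenvalues) : Matrix n n ℂ)
      = diagonal fun i => (RCLike.ofReal (f (hA.eigenvalues i)) : ℂ) *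
          RCLike.ofReal (g (hA.eigenvalues i)) := by
    rw [diagonal_eq_diagonal_iff]; intro i; simp
  rw [hd]; rfl

lemma cfc_add' (f g : ℝ → ℝ) :
    hA.cfc (fun x => f x + g x) = hA.cfc f + hA.cfc g := by
  rw [cfc_eq_conj hA, cfc_eq_conj hA, cfc_eq_conj hA,
    ← add_mul, ← mul_add, diagonal_add]
  have hd : (diagonal (RCLike.ofReal ∘ (fun x => f x + g x) ∘ hA.eigenvalues) : Matrix n n ℂ)
      = diagonal fun i => (RCLike.ofReal (f (hA.eigenvalues i)) : ℂ) +
          RCLike.ofReal (g (hA.eigenvalues i)) := by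
    rw [diagonal_eq_diagonal_iff]; intro i; simp
  rw [hd]; rfl

lemma cfc_const_mul' (r : ℝ) (f : ℝ → ℝ) :
    hA.cfc (fun x => r * f x) = (r : ℂ) • hA.cfc f := by
  rw [cfc_eq_conj hA, cfc_eq_conj hA, ← smul_mul_assoc, ← mul_smul_comm,
    ]
  rw [← diagonal_smul]
  have hd : (diagonal (RCLike.ofReal ∘ (fun x => r * f x) ∘ hA.eigenvalues) : Matrix n n ℂ)
      = diagonal ((r : ℂ) • (RCLike.ofReal ∘ f ∘ hA.eigenvalues)) := by
    rw [diagonal_eq_diagonal_iff]; intro i; simp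
  rw [hd]

lemma cfc_one' : hA.cfc (fun _ => 1) = 1 := by
  rw [cfc_eq_conj hA]
  have : (diagonal (RCLike.ofReal ∘ (fun _ => (1:ℝ)) ∘ hA.eigenvalues) : Matrix n n ℂ) = 1 := by
    rw [← diagonal_one, diagonal_eq_diagonal_iff]; intro i; simp
  rw [this, mul_one, U_U_star hA]

lemma cfc_id' : hA.cfc id = A := by
  rw [cfc_eq_conj hA]; conv_rhs => rw [hA.spectral_theorem, Unitary.conjStarAlgAut_apply]
  rfl

lemma cfc_id'' : hA.cfc (fun x => x) = A := cfc_id' hA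

lemma cfc_congr' {f g : ℝ → ℝ} (h : ∀ i, f (hA.eigenvalues i) = g (hA.eigenvalues i)) :
    hA.cfc f = hA.cfc g := by
  rw [cfc_eq_conj hA, cfc_eq_conj hA]
  have hd : (diagonal (RCLike.ofReal ∘ f ∘ hA.eigenvalues) : Matrix n n ℂ)
      = diagonal (RCLike.ofReal ∘ g ∘ hA.eigenvalues) := by
    rw [diagonal_eq_diagonal_iff]; intro i; simp [h i]
  rw [hd]

lemma cfc_eq_zero {g : ℝ → ℝ} (h : hA.cfc g = 0) (i : n) : g (hA.eigenvalues i) = 0 := by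
  rw [cfc_eq_conj hA] at h
  have e : ∀ D : Matrix n n ℂ,
      (star (IsHermitian.eigenvectorUnitary hA : Matrix n n ℂ)) *
        ((IsHermitian.eigenvectorUnitary hA : Matrix n n ℂ) * D *
          (star (IsHermitian.eigenvectorUnitary hA : Matrix n n ℂ))) *
        (IsHermitian.eigenvectorUnitary hA : Matrix n n ℂ) = D := by
    intro D
    calc _ = ((star (IsHermitian.eigenvectorUnitary hA : Matrix n n ℂ)) *
          (IsHermitian.eigenvectorUnitary hA : Matrix n n ℂ)) * D *
          ((star (IsHermitian.eigenvectorUnitary hA : Matrix n n ℂ)) *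
          (IsHermitian.eigenvectorUnitary hA : Matrix n n ℂ)) := by noncomm_ring
    _ = D := by rw [U_star_U hA]; simp
  have h2 : (diagonal (RCLike.ofReal ∘ g ∘ hA.eigenvalues) : Matrix n n ℂ) = 0 := by
    rw [← e (diagonal (RCLike.ofReal ∘ g ∘ hA.eigenvalues)), h]
    simp
  have := congrFun (congrFun h2 i) i
  simpa using this

lemma cfc_pow' : ∀ j : ℕ, hA.cfc (fun x => x ^ (j+1)) = A ^ (j+1) := by
  intro j
  induction j with
  | zero => simpa using cfc_id'' hA
  | succ j ih =>
    have : hA.cfc (fun x => x ^ (j+1+1)) = hA.cfc (fun x => (x ^ (j+1)) * x) := by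
      apply cfc_congr' hA; intro i; ring
    rw [this, cfc_mul' hA, ih, cfc_id'' hA, ← pow_succ]

end cfc

section family
variable {K : Type*} [Fintype K] [DecidableEq K] (w : K → n → ℂ)

lemma sum_outer_mul
    (hw : ∀ k l, star (w k) ⬝ᵥ w l = if k = l then (1:ℂ) else 0) (c d : K → ℂ) :
    (∑ k, c k • vecMulVec (w k) (star (w k))) * (∑ k, d k • vecMulVec (w k) (star (w k)))
      = ∑ k, (c k * d k) • vecMulVec (w k) (star (w k)) := by
  rw [Finset.sum_mul_sum]
  refine Finset.sum_congr rfl fun k _ => ?_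
  rw [Finset.sum_eq_single k]
  · rw [smul_mul_assoc, mul_smul_comm, vmv_mul, hw, if_pos rfl, one_smul, smul_smul]
  · intro l _ hl
    rw [smul_mul_assoc, mul_smul_comm, vmv_mul, hw, if_neg (fun h => hl h.symm), zero_smul,
      smul_zero, smul_zero]
  · intro h
    exact absurd (Finset.mem_univ k) h

lemma sum_outer_herm (c : K → ℝ) :
    (∑ k, (c k : ℂ) • vecMulVec (w k) (star (w k))).IsHermitian := by
  show _ᴴ = _
  rw [conjTranspose_sum]
  refine Finset.sum_congr rfl fun k _ => ?_
  rw [← star_eq_conjTranspose, star_smul, star_outer]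
  norm_num

lemma sum_outer_pow (hw : ∀ k l, star (w k) ⬝ᵥ w l = if k = l then (1:ℂ) else 0)
    (c : K → ℂ) : ∀ j : ℕ,
    (∑ k, c k • vecMulVec (w k) (star (w k))) ^ (j+1)
      = ∑ k, (c k ^ (j+1)) • vecMulVec (w k) (star (w k)) := by
  intro j; induction j with
  | zero => simp
  | succ j ih =>
    rw [pow_succ, ih, sum_outer_mul w hw]
    exact Finset.sum_congr rfl fun k _ => by rw [← pow_succ]

lemma sum_outer_cfc_poly (hw : ∀ k l, star (w k) ⬝ᵥ w l = if k = l then (1:ℂ) else 0)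
    (c : K → ℝ)
    (hA : (∑ k, (c k : ℂ) • vecMulVec (w k) (star (w k))).IsHermitian) (q : Polynomial ℝ) :
    hA.cfc (fun x => q.eval x)
      = ((q.eval 0 : ℝ) : ℂ) • 1 +
        ∑ k, (((q.eval (c k) - q.eval 0 : ℝ)) : ℂ) • vecMulVec (w k) (star (w k)) := by
  induction q using Polynomial.induction_on' with
  | add p r hp hr =>
    have h1 : (fun x => Polynomial.eval x (p + r))
        = fun x => Polynomial.eval x p + Polynomial.eval x r := by
      funext x; simp
    rw [h1, cfc_add' hA, hp, hr]
    simp only [Polynomial.eval_add, Complex.ofReal_add, Complex.ofReal_sub, add_smul, sub_smul,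
      Finset.sum_add_distrib, Finset.sum_sub_distrib]
    abel
  | monomial j a =>
    have h1 : (fun x => Polynomial.eval x (Polynomial.monomial j a)) = fun x => a * x ^ j := by
      funext x; simp [Polynomial.eval_monomial]
    rw [h1]
    cases j with
    | zero =>
      have h2 : (fun x : ℝ => a * x ^ 0) = fun x : ℝ => a * 1 := by funext x; simp
      rw [h2, cfc_const_mul' hA, cfc_one' hA]
      simp [Polynomial.eval_monomial]
    | succ j =>
      rw [cfc_const_mul' hA, cfc_pow' hA j, sum_outer_pow w hw _ j]
      simp only [Polynomial.eval_monomial, zero_pow (Nat.succ_ne_zero j), mul_zero,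
        Complex.ofReal_zero, zero_smul, zero_add, sub_zero, Finset.smul_sum, smul_smul]
      refine Finset.sum_congr rfl fun k _ => ?_
      push_cast
      ring_nf

lemma matCFC_sum_outer (hw : ∀ k l, star (w k) ⬝ᵥ w l = if k = l then (1:ℂ) else 0)
    (c : K → ℝ) (f : ℝ → ℝ) (hf : f 0 = 0) :
    matCFC f (∑ k, (c k : ℂ) • vecMulVec (w k) (star (w k)))
      = ∑ k, ((f (c k) : ℝ) : ℂ) • vecMulVec (w k) (star (w k)) := by
  have hA := sum_outer_herm w c
  rw [matCFC, dif_pos hA]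
  set s : Finset ℝ := insert 0 (Finset.image c Finset.univ) with hs
  set p := Lagrange.interpolate s id f with hp
  have hid : Set.InjOn id (s : Set ℝ) := fun a _ b _ h => h
  have hnode : ∀ x ∈ s, p.eval x = f x := by
    intro x hx
    rw [hp]; simpa using Lagrange.eval_interpolate_at_node f hid hx
  set q : Polynomial ℝ := Polynomial.X * ∏ k, (Polynomial.X - Polynomial.C (c k)) with hq
  have hq0 : q.eval 0 = 0 := by simp [hq]
  have hqc : ∀ k, q.eval (c k) = 0 := by
    intro k
    simp only [hq, Polynomial.eval_mul, Polynomial.eval_prod]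
    apply mul_eq_zero_of_right
    apply Finset.prod_eq_zero (Finset.mem_univ k)
    simp
  have hQ : hA.cfc (fun x => q.eval x) = 0 := by
    rw [sum_outer_cfc_poly w hw c hA q, hq0]
    simp [hqc]
  have heig : ∀ i, hA.eigenvalues i ∈ s := by
    intro i
    have h0 := cfc_eq_zero hA hQ i
    simp only [hq, Polynomial.eval_mul, Polynomial.eval_prod, Polynomial.eval_X,
      Polynomial.eval_sub, Polynomial.eval_C, mul_eq_zero] at h0
    rcases h0 with h | h
    · simp [hs, h]
    · rw [Finset.prod_eq_zero_iff] at h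
      obtain ⟨k, _, hk⟩ := h
      have : hA.eigenvalues i = c k := by linarith [sub_eq_zero.mp hk]
      simp [hs, this]
  have hcongr := cfc_congr' hA (f := f) (g := fun x => p.eval x)
    (fun i => by simpa using (hnode _ (heig i)).symm)
  rw [hcongr, sum_outer_cfc_poly w hw c hA p, hnode 0 (by simp [hs]), hf]
  simp only [Complex.ofReal_zero, zero_smul, zero_add, sub_zero]
  refine Finset.sum_congr rfl fun k _ => ?_
  rw [hnode (c k) (by simp [hs])]

lemma sum_outer_mulVec (c : K → ℂ) (x : n → ℂ) :
    (∑ k, c k • vecMulVec (w k) (star (w k))) *ᵥ x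
      = ∑ k, c k • ((star (w k) ⬝ᵥ x) • w k) := by
  ext i
  simp only [mulVec, dotProduct, Matrix.sum_apply, Matrix.smul_apply, vecMulVec_apply,
    Pi.star_apply, smul_eq_mul, Finset.sum_apply, Pi.smul_apply, Finset.sum_mul, Finset.mul_sum]
  rw [Finset.sum_comm]
  exact Finset.sum_congr rfl fun k _ => Finset.sum_congr rfl fun j _ => by ring

lemma sum_outer_psd (hw : ∀ k l, star (w k) ⬝ᵥ w l = if k = l then (1:ℂ) else 0)
    (c : K → ℝ) (hc : ∀ k, 0 ≤ c k) :
    (∑ k, (c k : ℂ) • vecMulVec (w k) (star (w k))).PosSemidef := by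
  refine .of_dotProduct_mulVec_nonneg (sum_outer_herm w c) fun x => ?_
  rw [sum_outer_mulVec]
  have hdp : star x ⬝ᵥ (∑ k, (c k : ℂ) • ((star (w k) ⬝ᵥ x) • w k))
      = ∑ k, (c k : ℂ) * (star (star (w k) ⬝ᵥ x) * (star (w k) ⬝ᵥ x)) := by
    have hstar : ∀ k, star (star (w k) ⬝ᵥ x) = ∑ i, w k i * star (x i) := by
      intro k
      simp [dotProduct, mul_comm]
    conv_lhs => rw [dotProduct]
    simp only [Finset.sum_apply, Pi.smul_apply, smul_eq_mul, Pi.star_apply, Finset.mul_sum]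
    rw [Finset.sum_comm]
    refine Finset.sum_congr rfl fun k _ => ?_
    rw [hstar k, Finset.sum_mul, Finset.mul_sum]
    exact Finset.sum_congr rfl fun i _ => by ring
  rw [hdp]
  apply Finset.sum_nonneg
  intro k _
  have h1 : (0:ℂ) ≤ (c k : ℂ) := by
    rw [Complex.zero_le_real]
    exact hc k
  exact mul_nonneg h1 (star_mul_self_nonneg _)
end family

lemma matSqrt_eq {A : Matrix n n ℂ} (h : A.PosSemidef) : matSqrt A = matCFC Real.sqrt A := by
  rw [matSqrt, dif_pos h, matCFC, dif_pos h.1]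

end helpers

section tensor
variable {m1 m2 : Type*} [Fintype m1] [Fintype m2] [DecidableEq m1] [DecidableEq m2]

lemma tensor_dot (x x' : m1 → ℂ) (y y' : m2 → ℂ) :
    star (fun pq : m1 × m2 => x pq.1 * y pq.2) ⬝ᵥ (fun pq : m1 × m2 => x' pq.1 * y' pq.2)
      = (star x ⬝ᵥ x') * (star y ⬝ᵥ y') := by
  simp only [dotProduct, Pi.star_apply, star_mul']
  rw [Fintype.sum_prod_type, Finset.sum_mul_sum]
  exact Finset.sum_congr rfl fun i _ => Finset.sum_congr rfl fun j _ => by ring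

lemma tensor_outer (x : m1 → ℂ) (y : m2 → ℂ) :
    vecMulVec (fun pq : m1 × m2 => x pq.1 * y pq.2) (star (fun pq : m1 × m2 => x pq.1 * y pq.2))
      = vecMulVec x (star x) ⊗ₖ vecMulVec y (star y) := by
  ext ⟨p, q⟩ ⟨p', q'⟩
  simp only [vecMulVec_apply, Pi.star_apply, star_mul', kroneckerMap_apply]
  ring

lemma kronecker_sumR {I : Type*} (s : Finset I) (A : Matrix m1 m1 ℂ)
    (B : I → Matrix m2 m2 ℂ) :
    A ⊗ₖ (∑ i ∈ s, B i) = ∑ i ∈ s, A ⊗ₖ B i := by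
  ext ⟨p, q⟩ ⟨p', q'⟩
  simp [kroneckerMap_apply, Finset.mul_sum, Matrix.sum_apply]

lemma sum_kroneckerR {I : Type*} (s : Finset I) (A : Matrix m2 m2 ℂ)
    (B : I → Matrix m1 m1 ℂ) :
    (∑ i ∈ s, B i) ⊗ₖ A = ∑ i ∈ s, B i ⊗ₖ A := by
  ext ⟨p, q⟩ ⟨p', q'⟩
  simp [kroneckerMap_apply, Finset.sum_mul, Matrix.sum_apply]

variable {N : Type*} [Fintype N] [DecidableEq N] (v : N → m1 → ℂ)

lemma PP_mul (hv : ∀ a b, star (v a) ⬝ᵥ v b = if a = b then (1:ℂ) else 0) (a b : N) :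
    vecMulVec (v a) (star (v a)) * vecMulVec (v b) (star (v b))
      = if a = b then vecMulVec (v a) (star (v a)) else 0 := by
  rw [vmv_mul, hv]
  split_ifs with h
  · subst h; rw [one_smul]
  · rw [zero_smul]

lemma blockmul (hv : ∀ a b, star (v a) ⬝ᵥ v b = if a = b then (1:ℂ) else 0) (B C : N → Matrix m2 m2 ℂ) :
    (∑ a, vecMulVec (v a) (star (v a)) ⊗ₖ B a) * (∑ b, vecMulVec (v b) (star (v b)) ⊗ₖ C b)
      = ∑ a, vecMulVec (v a) (star (v a)) ⊗ₖ (B a * C a) := by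
  rw [Finset.sum_mul_sum]
  refine Finset.sum_congr rfl fun a _ => ?_
  rw [Finset.sum_eq_single a]
  · rw [← mul_kronecker_mul, PP_mul v hv, if_pos rfl]
  · intro b _ hb
    rw [← mul_kronecker_mul, PP_mul v hv, if_neg (fun h => hb h.symm), zero_kronecker]
  · intro h; exact absurd (Finset.mem_univ a) h

lemma block_trace (hv : ∀ a b, star (v a) ⬝ᵥ v b = if a = b then (1:ℂ) else 0) (X : N → Matrix m2 m2 ℂ) :
    (∑ a, vecMulVec (v a) (star (v a)) ⊗ₖ X a).trace = ∑ a, (X a).trace := by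
  rw [Matrix.trace_sum]
  refine Finset.sum_congr rfl fun a _ => ?_
  rw [trace_kronecker]
  have : (vecMulVec (v a) (star (v a))).trace = 1 := by
    have h1 : (vecMulVec (v a) (star (v a))).trace = star (v a) ⬝ᵥ v a := by
      simp [Matrix.trace, Matrix.diag, vecMulVec_apply, dotProduct, mul_comm]
    rw [h1, hv, if_pos rfl]
  rw [this, one_mul]

lemma regroup {I : Type*} [Fintype I] (g : N → I → m2 → ℂ) (γ : N × I → ℂ) :
    (∑ k : N × I, γ k • vecMulVec (fun pq : m1 × m2 => v k.1 pq.1 * g k.1 k.2 pq.2)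
        (star (fun pq : m1 × m2 => v k.1 pq.1 * g k.1 k.2 pq.2)))
      = ∑ a, vecMulVec (v a) (star (v a)) ⊗ₖ
          (∑ i, γ (a, i) • vecMulVec (g a i) (star (g a i))) := by
  rw [Fintype.sum_prod_type]
  refine Finset.sum_congr rfl fun a _ => ?_
  rw [kronecker_sumR]
  refine Finset.sum_congr rfl fun i _ => ?_
  rw [tensor_outer, kronecker_smul]


end tensor

end BS

open BS

theorem stmt16 {N m d : ℕ} (v : Fin N → (Fin m → ℂ))
    (hv : ∀ a b, star (v a) ⬝ᵥ v b = if a = b then (1 : ℂ) else 0)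
    (μ : Fin N → ℝ) (hμ : ∀ a, 0 ≤ μ a) (hμ1 : ∑ a, μ a = 1)
    (σ : Fin N → Matrix (Fin d) (Fin d) ℂ)
    (hσ : ∀ a, (σ a).PosSemidef) (hσtr : ∀ a, (σ a).trace = 1) :
    RBS (∑ a, (μ a : ℂ) • ((Matrix.of fun i j => v a i * star (v a j)) ⊗ₖ σ a))
        ((∑ a, (μ a : ℂ) • (Matrix.of fun i j : Fin m => v a i * star (v a j))) ⊗ₖ
          (1 : Matrix (Fin d) (Fin d) ℂ)) =
      -∑ a, μ a * vN (σ a) ∧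
    RBS (∑ a, (μ a : ℂ) • ((Matrix.of fun i j => v a i * star (v a j)) ⊗ₖ σ a))
        ((∑ a, (μ a : ℂ) • (Matrix.of fun i j : Fin m => v a i * star (v a j))) ⊗ₖ
          (1 : Matrix (Fin d) (Fin d) ℂ)) ≤ 0 := by
  classical
  have hP : ∀ a : Fin N, (Matrix.of fun i j => v a i * star (v a j))
      = vecMulVec (v a) (star (v a)) := fun a => rfl
  set ω : Matrix (Fin m × Fin d) (Fin m × Fin d) ℂ :=
    ∑ a, (μ a : ℂ) • ((Matrix.of fun i j => v a i * star (v a j)) ⊗ₖ σ a) with hω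
  set φ : Matrix (Fin m × Fin d) (Fin m × Fin d) ℂ :=
    (∑ a, (μ a : ℂ) • (Matrix.of fun i j : Fin m => v a i * star (v a j))) ⊗ₖ
      (1 : Matrix (Fin d) (Fin d) ℂ) with hφ
  set ψ : Fin N → Fin d → Fin d → ℂ :=
    fun a i q => ((hσ a).1.eigenvectorUnitary : Matrix (Fin d) (Fin d) ℂ) q i with hψdef
  set s : Fin N → Fin d → ℝ := fun a => (hσ a).1.eigenvalues with hsdef
  set t : Fin N → Fin d → ℝ := fun a i => (μ a)⁻¹ * (μ a * s a i) with htdef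
  set δv : Fin d → Fin d → ℂ := fun j q => if q = j then 1 else 0 with hδdef
  have hψorth : ∀ a i i', star (ψ a i) ⬝ᵥ ψ a i' = if i = i' then (1:ℂ) else 0 := by
    intro a i i'
    calc star (ψ a i) ⬝ᵥ ψ a i'
        = ((star ((hσ a).1.eigenvectorUnitary : Matrix (Fin d) (Fin d) ℂ)) *
            ((hσ a).1.eigenvectorUnitary : Matrix (Fin d) (Fin d) ℂ)) i i' := by
          rw [Matrix.mul_apply]
          exact Finset.sum_congr rfl fun q _ => by rw [Matrix.star_apply]; rfl
      _ = (1 : Matrix (Fin d) (Fin d) ℂ) i i' := by rw [U_star_U (hσ a).1]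
      _ = if i = i' then (1:ℂ) else 0 := Matrix.one_apply
  have hσdec : ∀ a, σ a = ∑ i, ((s a i : ℝ) : ℂ) • vecMulVec (ψ a i) (star (ψ a i)) := by
    intro a
    conv_lhs => rw [(hσ a).1.spectral_theorem]
    ext p q
    simp only [Matrix.mul_apply, Matrix.diagonal_apply, Matrix.sum_apply, Matrix.smul_apply,
      vecMulVec_apply, Pi.star_apply, smul_eq_mul, Function.comp_apply, Matrix.star_apply,
      Unitary.conjStarAlgAut_apply, Unitary.coe_star, ite_mul, zero_mul, mul_ite, mul_zero, Finset.sum_ite_eq, Finset.sum_ite_eq',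
      Finset.mem_univ, if_true, hψdef, hsdef]
    exact Finset.sum_congr rfl fun j _ => by rw [mul_right_comm]; exact mul_comm _ _
  have hδorth : ∀ j j', star (δv j) ⬝ᵥ δv j' = if j = j' then (1:ℂ) else 0 := by
    intro j j'
    simp only [hδdef, dotProduct, Pi.star_apply]
    by_cases h : j = j'
    · subst h; simp
    · rw [if_neg h, Finset.sum_eq_zero]
      intro q _
      by_cases h1 : q = j
      · subst h1
        simp [h]
      · simp [h1]
  have hδouter : ∑ j, vecMulVec (δv j) (star (δv j)) = (1 : Matrix (Fin d) (Fin d) ℂ) := by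
    ext q q'
    simp only [Matrix.sum_apply, vecMulVec_apply, Pi.star_apply, hδdef, Matrix.one_apply]
    by_cases h : q = q'
    · subst h; simp [Finset.sum_ite_eq]
    · simp only [if_neg h]
      rw [Finset.sum_eq_zero]
      intro j _
      by_cases h1 : q = j <;> by_cases h2 : q' = j <;>
        simp [h1, h2] <;> exact absurd (h1.trans h2.symm) h
  have hworth : ∀ k l : Fin N × Fin d,
      star (fun pq : Fin m × Fin d => v k.1 pq.1 * ψ k.1 k.2 pq.2) ⬝ᵥ
        (fun pq : Fin m × Fin d => v l.1 pq.1 * ψ l.1 l.2 pq.2) = if k = l then (1:ℂ) else 0 := by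
    intro k l
    rw [tensor_dot, hv]
    by_cases h1 : k.1 = l.1
    · obtain ⟨a, i⟩ := k; obtain ⟨b, j⟩ := l
      dsimp only at h1
      subst h1
      rw [hψorth]
      by_cases h2 : i = j <;> simp [Prod.ext_iff, h2]
    · rw [if_neg h1, zero_mul, if_neg (fun h => h1 (congrArg Prod.fst h))]
  have huorth : ∀ k l : Fin N × Fin d,
      star (fun pq : Fin m × Fin d => v k.1 pq.1 * δv k.2 pq.2) ⬝ᵥ
        (fun pq : Fin m × Fin d => v l.1 pq.1 * δv l.2 pq.2) = if k = l then (1:ℂ) else 0 := by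
    intro k l
    rw [tensor_dot, hv, hδorth]
    by_cases h1 : k.1 = l.1 <;> by_cases h2 : k.2 = l.2 <;> simp [Prod.ext_iff, h1, h2]
  -- block and flat decompositions of ω
  have hωblock : ω = ∑ a, vecMulVec (v a) (star (v a)) ⊗ₖ
      (∑ i, ((μ a * s a i : ℝ) : ℂ) • vecMulVec (ψ a i) (star (ψ a i))) := by
    rw [hω]
    refine Finset.sum_congr rfl fun a _ => ?_
    rw [hP a, hσdec a, kronecker_sumR, Finset.smul_sum]
    conv_rhs => rw [kronecker_sumR]
    refine Finset.sum_congr rfl fun i _ => ?_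
    simp only [kronecker_smul, smul_smul]
    norm_cast
  have hωflat : ω = ∑ k : Fin N × Fin d, ((μ k.1 * s k.1 k.2 : ℝ) : ℂ) •
      vecMulVec (fun pq : Fin m × Fin d => v k.1 pq.1 * ψ k.1 k.2 pq.2)
        (star (fun pq : Fin m × Fin d => v k.1 pq.1 * ψ k.1 k.2 pq.2)) := by
    rw [hωblock]
    exact (regroup v ψ (fun k => ((μ k.1 * s k.1 k.2 : ℝ) : ℂ))).symm
  -- block and flat decompositions of φ
  have hφflat : φ = ∑ k : Fin N × Fin d, ((μ k.1 : ℝ) : ℂ) •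
      vecMulVec (fun pq : Fin m × Fin d => v k.1 pq.1 * δv k.2 pq.2)
        (star (fun pq : Fin m × Fin d => v k.1 pq.1 * δv k.2 pq.2)) := by
    rw [hφ, sum_kroneckerR, regroup v (fun _ i => δv i) (fun k => ((μ k.1 : ℝ) : ℂ))]
    refine Finset.sum_congr rfl fun a _ => ?_
    dsimp only
    rw [hP a, smul_kronecker, ← Finset.smul_sum, hδouter, kronecker_smul]
  -- positivity of ω and sqrt
  have hωpsd : ω.PosSemidef := by
    rw [hωflat]
    exact sum_outer_psd _ hworth _
      (fun k => mul_nonneg (hμ k.1) ((hσ k.1).eigenvalues_nonneg k.2))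
  have hsqrtflat : matSqrt ω = ∑ k : Fin N × Fin d, ((Real.sqrt (μ k.1 * s k.1 k.2) : ℝ) : ℂ) •
      vecMulVec (fun pq : Fin m × Fin d => v k.1 pq.1 * ψ k.1 k.2 pq.2)
        (star (fun pq : Fin m × Fin d => v k.1 pq.1 * ψ k.1 k.2 pq.2)) := by
    rw [matSqrt_eq hωpsd, hωflat]
    exact matCFC_sum_outer _ hworth (fun k => μ k.1 * s k.1 k.2) Real.sqrt Real.sqrt_zero
  have hsqrtblock : matSqrt ω = ∑ a, vecMulVec (v a) (star (v a)) ⊗ₖ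
      (∑ i, ((Real.sqrt (μ a * s a i) : ℝ) : ℂ) • vecMulVec (ψ a i) (star (ψ a i))) := by
    rw [hsqrtflat]
    exact regroup v ψ (fun k => ((Real.sqrt (μ k.1 * s k.1 k.2) : ℝ) : ℂ))
  have hpinvflat : matPinv φ = ∑ k : Fin N × Fin d, (((μ k.1)⁻¹ : ℝ) : ℂ) •
      vecMulVec (fun pq : Fin m × Fin d => v k.1 pq.1 * δv k.2 pq.2)
        (star (fun pq : Fin m × Fin d => v k.1 pq.1 * δv k.2 pq.2)) := by
    rw [matPinv, hφflat]
    exact matCFC_sum_outer _ huorth (fun k => (μ k.1)) (·⁻¹) inv_zero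
  have hpinvblock : matPinv φ = ∑ a, vecMulVec (v a) (star (v a)) ⊗ₖ
      ((((μ a)⁻¹ : ℝ) : ℂ) • 1) := by
    rw [hpinvflat, regroup v (fun _ i => δv i) (fun k => (((μ k.1)⁻¹ : ℝ) : ℂ))]
    refine Finset.sum_congr rfl fun a _ => ?_
    dsimp only
    rw [← Finset.smul_sum, hδouter]
  -- the middle matrix
  have hMblock : matSqrt ω * matPinv φ * matSqrt ω = ∑ a, vecMulVec (v a) (star (v a)) ⊗ₖ
      (∑ i, ((t a i : ℝ) : ℂ) • vecMulVec (ψ a i) (star (ψ a i))) := by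
    rw [hsqrtblock, hpinvblock, blockmul v hv, blockmul v hv]
    refine Finset.sum_congr rfl fun a _ => ?_
    rw [mul_smul_comm, mul_one, smul_mul_assoc, sum_outer_mul (ψ a) (hψorth a), Finset.smul_sum]
    refine congrArg _ ?_
    refine Finset.sum_congr rfl fun i _ => ?_
    rw [smul_smul, ← Complex.ofReal_mul,
      Real.mul_self_sqrt (mul_nonneg (hμ a) ((hσ a).eigenvalues_nonneg i)), ← Complex.ofReal_mul]
  have hMflat : matSqrt ω * matPinv φ * matSqrt ω
      = ∑ k : Fin N × Fin d, ((t k.1 k.2 : ℝ) : ℂ) •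
      vecMulVec (fun pq : Fin m × Fin d => v k.1 pq.1 * ψ k.1 k.2 pq.2)
        (star (fun pq : Fin m × Fin d => v k.1 pq.1 * ψ k.1 k.2 pq.2)) := by
    rw [hMblock]
    exact (regroup v ψ (fun k => ((t k.1 k.2 : ℝ) : ℂ))).symm
  have hlogflat : matLog (matSqrt ω * matPinv φ * matSqrt ω)
      = ∑ k : Fin N × Fin d, ((Real.log (t k.1 k.2) : ℝ) : ℂ) •
      vecMulVec (fun pq : Fin m × Fin d => v k.1 pq.1 * ψ k.1 k.2 pq.2)
        (star (fun pq : Fin m × Fin d => v k.1 pq.1 * ψ k.1 k.2 pq.2)) := by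
    rw [matLog, hMflat]
    exact matCFC_sum_outer _ hworth (fun k => t k.1 k.2) Real.log Real.log_zero
  have hlogblock : matLog (matSqrt ω * matPinv φ * matSqrt ω)
      = ∑ a, vecMulVec (v a) (star (v a)) ⊗ₖ
        (∑ i, ((Real.log (t a i) : ℝ) : ℂ) • vecMulVec (ψ a i) (star (ψ a i))) := by
    rw [hlogflat]
    exact regroup v ψ (fun k => ((Real.log (t k.1 k.2) : ℝ) : ℂ))
  -- trace computation
  have inner_tr : ∀ (a : Fin N) (c : Fin d → ℂ),
      (∑ i, c i • vecMulVec (ψ a i) (star (ψ a i))).trace = ∑ i, c i := by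
    intro a c
    rw [Matrix.trace_sum]
    refine Finset.sum_congr rfl fun i _ => ?_
    rw [Matrix.trace_smul, trace_outer, hψorth, if_pos rfl, smul_eq_mul, mul_one]
  have htrace : (ω * matLog (matSqrt ω * matPinv φ * matSqrt ω)).trace
      = ∑ a, ∑ i, ((μ a * s a i : ℝ) : ℂ) * ((Real.log (t a i) : ℝ) : ℂ) := by
    rw [hlogblock, hωblock, blockmul v hv, block_trace v hv]
    refine Finset.sum_congr rfl fun a _ => ?_
    rw [sum_outer_mul (ψ a) (hψorth a), inner_tr a]
  -- real arithmetic
  have hre : RBS ω φ = ∑ a, ∑ i, (μ a * s a i) * Real.log (t a i) := by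
    rw [RBS, htrace]
    have : (∑ a, ∑ i, ((μ a * s a i : ℝ) : ℂ) * ((Real.log (t a i) : ℝ) : ℂ))
        = (((∑ a, ∑ i, (μ a * s a i) * Real.log (t a i) : ℝ)) : ℂ) := by
      push_cast
      ring
    rw [this, Complex.ofReal_re]
  have hvN : ∀ a, vN (σ a) = -∑ i, s a i * Real.log (s a i) := by
    intro a
    rw [vN, dif_pos (hσ a).1]
  have hkey : ∀ a, ∑ i, (μ a * s a i) * Real.log (t a i) = μ a * ∑ i, s a i * Real.log (s a i) := by
    intro a
    by_cases hμa : μ a = 0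
    · simp [hμa]
    · have ht : ∀ i, t a i = s a i := by
        intro i
        rw [htdef]
        dsimp only
        rw [← mul_assoc, inv_mul_cancel₀ hμa, one_mul]
      rw [Finset.mul_sum]
      exact Finset.sum_congr rfl fun i _ => by rw [ht i]; ring
  have main : RBS ω φ = -∑ a, μ a * vN (σ a) := by
    rw [hre, ← Finset.sum_neg_distrib]
    refine Finset.sum_congr rfl fun a _ => ?_
    rw [hkey a, hvN a]
    ring
  refine ⟨main, ?_⟩
  rw [main, neg_nonpos]
  -- 0 ≤ ∑ μ a * vN (σ a)
  apply Finset.sum_nonneg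
  intro a _
  have hsum_s : ∑ i, s a i = 1 := by
    have h1 := hσtr a
    rw [hσdec a] at h1
    rw [inner_tr a] at h1
    have h2 : ((∑ i, s a i : ℝ) : ℂ) = ((1 : ℝ) : ℂ) := by
      push_cast
      simpa using h1
    exact_mod_cast h2
  have hs_nonneg : ∀ i, 0 ≤ s a i := fun i => (hσ a).eigenvalues_nonneg i
  have hs_le_one : ∀ i, s a i ≤ 1 := by
    intro i
    rw [← hsum_s]
    exact Finset.single_le_sum (fun j _ => hs_nonneg j) (Finset.mem_univ i)
  have hvN_nonneg : 0 ≤ vN (σ a) := by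
    rw [hvN a, neg_nonneg]
    apply Finset.sum_nonpos
    intro i _
    exact mul_nonpos_iff.mpr (Or.inl ⟨hs_nonneg i, Real.log_nonpos (hs_nonneg i) (hs_le_one i)⟩)
  exact mul_nonneg (hμ a) hvN_nonneg

end
end
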